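/- Suppose the multi-parameter filtration F = {F(s̃)}_{s̃∈ℕ₀^d} satisfies conditions (F1), (F2), and (F4). Then for each i = 1,…,d, every supermartingale with respect to the small one-parameter filtration F_i = {F_i(t)}_{t∈ℕ₀} is also a supermartingale with respect to the large one-parameter filtration F^i = {F^i(t)}_{t∈ℕ₀}. -/

import Mathlib

open MeasureTheory Filter Set
open scoped Topology Classical

noncomputable section

namespace DynAlloc

variable {Ω : Type*}

/-- `g` is an essential supremum of the family `S` of random variables:
it is an a.e. upper bound for `S`, and a.e. below any other a.e. upper bound. -/
def IsEssSup [MeasurableSpace Ω] (μ : Measure Ω) (S : Set (Ω → ℝ)) (g : Ω → ℝ) : Prop :=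
  (∀ f ∈ S, f ≤ᵐ[μ] g) ∧ ∀ g' : Ω → ℝ, (∀ f ∈ S, f ≤ᵐ[μ] g') → g ≤ᵐ[μ] g'

/-- `β ^ n` for an extended natural number `n`, with the value `0` at `n = ∞`
(appropriate for a discount factor `β ∈ (0,1)`). -/
def epow (β : ℝ) (n : ℕ∞) : ℝ := if n = ⊤ then 0 else β ^ n.toNat

/-- The collection `S(t)`: extended-valued stopping times of the filtration `𝓕`
taking values in `{t, t+1, …} ∪ {+∞}`. -/
def MemS (𝓕 : ℕ → MeasurableSpace Ω) (t : ℕ) (τ : Ω → ℕ∞) : Prop :=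
  (∀ n : ℕ, MeasurableSet[𝓕 n] {ω | τ ω ≤ (n : ℕ∞)}) ∧ ∀ ω, (t : ℕ∞) ≤ τ ω

/-- The total reward `Y(τ;m) = Σ_{u=t}^{τ-1} β^{u-t} h(u+1) + m β^{τ-t}` received upon
stopping at the (possibly infinite) time `τ`, starting from time `t`, with exit reward `m`. -/
def stopReward (β : ℝ) (h : ℕ → Ω → ℝ) (t : ℕ) (m : ℝ) (τ : Ω → ℕ∞) (ω : Ω) : ℝ :=
  (∑' u : ℕ, if t ≤ u ∧ (u : ℕ∞) < τ ω then β ^ (u - t) * h (u + 1) ω else 0)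
    + m * epow β (τ ω - (t : ℕ∞))

/-- The family of conditional expected rewards `E[Y(τ;m) | 𝓕(t)]`, `τ ∈ S(t)`,
whose essential supremum is the optimal stopping value `V(t;m)`. -/
def VFamily [MeasurableSpace Ω] (μ : Measure Ω) (𝓕 : ℕ → MeasurableSpace Ω) (β : ℝ)
    (h : ℕ → Ω → ℝ) (t : ℕ) (m : ℝ) : Set (Ω → ℝ) :=
  {f | ∃ τ : Ω → ℕ∞, MemS 𝓕 t τ ∧ f = μ[stopReward β h t m τ | 𝓕 t]}

/-- The optimal stopping time `σ(t;m) = inf{θ ≥ t : V(θ;m) = m}` (`= ∞` if no such θ). -/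
def sigma (V : ℕ → ℝ → Ω → ℝ) (t : ℕ) (m : ℝ) (ω : Ω) : ℕ∞ :=
  sInf {θ : ℕ∞ | ∃ n : ℕ, θ = (n : ℕ∞) ∧ t ≤ n ∧ V n m ω = m}

/-- The left limit `σ(t;m−)` of the decreasing map `m' ↦ σ(t;m')` at `m`. -/
def sigmaLeft (V : ℕ → ℝ → Ω → ℝ) (t : ℕ) (m : ℝ) (ω : Ω) : ℕ∞ :=
  ⨅ m' ∈ Set.Ico (0 : ℝ) m, sigma V t m' ω

/-- The family of positive `𝓕(t)`-measurable random variables `X` with `V(t;X) ≥ X`,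
whose essential supremum is the Gittins index `M(t)`. -/
def GittinsFamily [MeasurableSpace Ω] (μ : Measure Ω) (𝓕 : ℕ → MeasurableSpace Ω)
    (V : ℕ → ℝ → Ω → ℝ) (t : ℕ) : Set (Ω → ℝ) :=
  {X | (∀ ω, 0 < X ω) ∧ StronglyMeasurable[𝓕 t] X ∧ ∀ᵐ ω ∂μ, X ω ≤ V t (X ω) ω}

/-- The lower envelope `M̲(t,θ) = min_{t ≤ u ≤ θ} M(u)` of the Gittins index. -/
def Mlow (M : ℕ → Ω → ℝ) (t θ : ℕ) (ω : Ω) : ℝ :=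
  sInf ((fun u => M u ω) '' {u : ℕ | t ≤ u ∧ u ≤ θ})

/-! ### Multi-parameter objects -/

variable {d : ℕ}

/-- The multi-parameter filtration `F(s̃) := ⋁_i F_i(s_i)` generated by `d`
one-parameter filtrations. -/
def Fmulti (𝓕i : Fin d → ℕ → MeasurableSpace Ω) (s : Fin d → ℕ) : MeasurableSpace Ω :=
  ⨆ i, 𝓕i i (s i)

/-- An allocation strategy for `s̃`: starts at `s̃`, moves one step in a coordinate
direction at each time, non-anticipatively. -/
def IsAllocStrategy (𝓕M : (Fin d → ℕ) → MeasurableSpace Ω) (s : Fin d → ℕ)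
    (T : ℕ → Ω → Fin d → ℕ) : Prop :=
  (∀ ω, T 0 ω = s) ∧
  (∀ (t : ℕ) (ω : Ω), ∃ j : Fin d, T (t + 1) ω = T t ω + Pi.single j 1) ∧
  (∀ (t : ℕ) (j : Fin d) (r : Fin d → ℕ),
    MeasurableSet[𝓕M r] {ω | T (t + 1) ω = T t ω + Pi.single j 1 ∧ T t ω = r})

/-- The σ-algebra `F(ν)` generated by a (stopping) point `ν`:
`F(ν) = σ({A : A ∩ {ν = r̃} ∈ F(r̃) for all r̃})`. -/
def stopSigma (𝓕M : (Fin d → ℕ) → MeasurableSpace Ω) (ν : Ω → Fin d → ℕ) :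
    MeasurableSpace Ω :=
  MeasurableSpace.generateFrom {A | ∀ r, MeasurableSet[𝓕M r] (A ∩ {ω | ν ω = r})}

/-- `τ` is a stopping time of the one-parameter filtration `F(T̃) = {F(T̃(t))}`. -/
def IsPolicyStop (𝓕M : (Fin d → ℕ) → MeasurableSpace Ω) (T : ℕ → Ω → Fin d → ℕ)
    (τ : Ω → ℕ∞) : Prop :=
  ∀ t : ℕ, MeasurableSet[stopSigma 𝓕M (T t)] {ω | τ ω ≤ (t : ℕ∞)}

/-- Total discounted reward `R(Π;M)` of the policy `Π = (T̃,τ)` with retirement reward `M`. -/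
def policyReward (β : ℝ) (h : Fin d → ℕ → Ω → ℝ) (T : ℕ → Ω → Fin d → ℕ)
    (τ : Ω → ℕ∞) (M : ℝ) (ω : Ω) : ℝ :=
  (∑ i : Fin d, ∑' t : ℕ,
      if (t : ℕ∞) < τ ω then
        β ^ t * h i (T t ω i + 1) ω * ((T (t + 1) ω i : ℝ) - (T t ω i : ℝ))
      else 0)
    + M * epow β (τ ω)

/-- Total discounted reward `R(T̃)` of an allocation strategy (no retirement). -/
def allocReward (β : ℝ) (h : Fin d → ℕ → Ω → ℝ) (T : ℕ → Ω → Fin d → ℕ) (ω : Ω) : ℝ :=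
  ∑ i : Fin d, ∑' t : ℕ,
    β ^ t * h i (T t ω i + 1) ω * ((T (t + 1) ω i : ℝ) - (T t ω i : ℝ))

/-- The family `{E[R(Π;M) | F(s̃)] : Π ∈ P(s̃)}` whose essential supremum is `Φ(s̃;M)`. -/
def PolicyFamily [MeasurableSpace Ω] (μ : Measure Ω) (𝓕M : (Fin d → ℕ) → MeasurableSpace Ω)
    (β : ℝ) (h : Fin d → ℕ → Ω → ℝ) (s : Fin d → ℕ) (M : ℝ) : Set (Ω → ℝ) :=
  {f | ∃ (T : ℕ → Ω → Fin d → ℕ) (τ : Ω → ℕ∞),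
      IsAllocStrategy 𝓕M s T ∧ IsPolicyStop 𝓕M T τ ∧
      f = μ[policyReward β h T τ M | 𝓕M s]}

/-- The family `{E[R(T̃) | F(s̃)] : T̃ ∈ A(s̃)}` whose essential supremum is `Φ(s̃)`. -/
def AllocFamily [MeasurableSpace Ω] (μ : Measure Ω) (𝓕M : (Fin d → ℕ) → MeasurableSpace Ω)
    (β : ℝ) (h : Fin d → ℕ → Ω → ℝ) (s : Fin d → ℕ) : Set (Ω → ℝ) :=
  {f | ∃ T : ℕ → Ω → Fin d → ℕ, IsAllocStrategy 𝓕M s T ∧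
      f = μ[allocReward β h T | 𝓕M s]}

/-- A strategy of index type: it always engages a project of maximal Gittins index. -/
def IsIndexType (MG : Fin d → ℕ → Ω → ℝ) (T : ℕ → Ω → Fin d → ℕ) : Prop :=
  ∀ (i : Fin d) (t : ℕ) (ω : Ω), T (t + 1) ω = T t ω + Pi.single i 1 →
    MG i (T t ω i) ω = ⨆ j : Fin d, MG j (T t ω j) ω

/-- The total operational time `τ(m;s̃) = Σ_i (σ_i(s_i;m) − s_i)`. -/
def tauOp (V : Fin d → ℕ → ℝ → Ω → ℝ) (s : Fin d → ℕ) (m : ℝ) (ω : Ω) : ℕ∞ :=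
  ∑ i : Fin d, (sigma (V i) (s i) m ω - (s i : ℕ∞))

/-- The left limit `τ(m−;s̃)` of the decreasing map `m' ↦ τ(m';s̃)` at `m`. -/
def tauOpLeft (V : Fin d → ℕ → ℝ → Ω → ℝ) (s : Fin d → ℕ) (m : ℝ) (ω : Ω) : ℕ∞ :=
  ⨅ m' ∈ Set.Ico (0 : ℝ) m, tauOp V s m' ω

/-- The right inverse `N(t;s̃) = inf{m ≥ 0 : τ(m;s̃) ≤ t}` of the total operational time. -/
def Nval (V : Fin d → ℕ → ℝ → Ω → ℝ) (s : Fin d → ℕ) (t : ℕ) (ω : Ω) : ℝ :=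
  sInf {m : ℝ | 0 ≤ m ∧ tauOp V s m ω ≤ (t : ℕ∞)}

/-- The synchronization identity for an allocation strategy `T̃` started at `s̃`. -/
def SatisfiesSync [MeasurableSpace Ω] (μ : Measure Ω) (V : Fin d → ℕ → ℝ → Ω → ℝ)
    (s : Fin d → ℕ) (T : ℕ → Ω → Fin d → ℕ) : Prop :=
  ∀ᵐ ω ∂μ, ∀ (t : ℕ) (m : ℝ), 0 < m →
    (∑ i : Fin d, min ((T t ω i - s i : ℕ) : ℕ∞) (sigma (V i) (s i) m ω - (s i : ℕ∞)))
      = min (t : ℕ∞) (tauOp V s m ω)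

/-- The quantities `y_i(t) = τ(N(t)) + Σ_{j ≤ i} Δσ_j(N(t))` used to define the explicit
synchronization-type strategy (the sum ranges over the first `i` projects). -/
def yfun (V : Fin d → ℕ → ℝ → Ω → ℝ) (s : Fin d → ℕ) (i : ℕ) (t : ℕ) (ω : Ω) : ℕ∞ :=
  tauOp V s (Nval V s t ω) ω +
    ∑ j ∈ Finset.univ.filter (fun j : Fin d => (j : ℕ) < i),
      (sigmaLeft (V j) (s j) (Nval V s t ω) ω - sigma (V j) (s j) (Nval V s t ω) ω)

/-- The unique (1-indexed) `k = k(t)` with `y_{k−1}(t) ≤ t < y_k(t)`. -/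
def kfun (V : Fin d → ℕ → ℝ → Ω → ℝ) (s : Fin d → ℕ) (t : ℕ) (ω : Ω) : ℕ :=
  sInf {i : ℕ | 1 ≤ i ∧ (t : ℕ∞) < yfun V s i t ω}

/-- The explicit allocation strategy of (5.9) (translated to start at `s̃`):
`T*_i(t) = σ_i(N(t)−)` for `i < k(t)`, `T*_{k(t)}(t) = σ_{k(t)}(N(t)) + t − y_{k(t)−1}(t)`,
and `T*_i(t) = σ_i(N(t))` for `i > k(t)`. -/
def Tstar (V : Fin d → ℕ → ℝ → Ω → ℝ) (s : Fin d → ℕ) (t : ℕ) (ω : Ω) : Fin d → ℕ :=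
  if t = 0 then s
  else fun i =>
    if (i : ℕ) + 1 < kfun V s t ω then
      (sigmaLeft (V i) (s i) (Nval V s t ω) ω).toNat
    else if (i : ℕ) + 1 = kfun V s t ω then
      (sigma (V i) (s i) (Nval V s t ω) ω).toNat + (t - (yfun V s (i : ℕ) t ω).toNat)
    else (sigma (V i) (s i) (Nval V s t ω) ω).toNat


/-- The "large" one-parameter filtration `F^i(t) = σ(⋃_{r : r_i ≤ t} F(r̃))`. -/
def Fbig {d : ℕ} (𝓕M : (Fin d → ℕ) → MeasurableSpace Ω) (i : Fin d) (t : ℕ) :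
    MeasurableSpace Ω :=
  ⨆ (r : Fin d → ℕ) (_ : r i ≤ t), 𝓕M r

section EnlargementAux

variable {Ω : Type*} [m0 : MeasurableSpace Ω] {μ : Measure Ω} [IsProbabilityMeasure μ]
  {d : ℕ} {𝓕M : (Fin d → ℕ) → MeasurableSpace Ω}

lemma single_inf_aux (i : Fin d) {u t : ℕ} (hut : u ≤ t) {r : Fin d → ℕ} (hr : r i ≤ u) :
    (r ⊔ Pi.single i u) ⊓ Pi.single i t = Pi.single i u := by
  funext j
  rcases eq_or_ne j i with rfl | h
  · simp only [Pi.inf_apply, Pi.sup_apply, Pi.single_eq_same]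
    omega
  · simp only [Pi.inf_apply, Pi.sup_apply, Pi.single_eq_of_ne h]
    omega

lemma indicator_integral_eq
    (hF1 : ∀ s r : Fin d → ℕ, s ≤ r → 𝓕M s ≤ 𝓕M r)
    (hle : ∀ s : Fin d → ℕ, 𝓕M s ≤ m0)
    (hF4 : ∀ (s r : Fin d → ℕ) (A B : Set Ω), MeasurableSet[𝓕M s] A →
      MeasurableSet[𝓕M r] B →
      μ[(A ∩ B).indicator (fun _ => (1 : ℝ)) | 𝓕M (s ⊓ r)] =ᵐ[μ]
        fun ω => (μ[A.indicator (fun _ => (1 : ℝ)) | 𝓕M (s ⊓ r)]) ω *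
          (μ[B.indicator (fun _ => (1 : ℝ)) | 𝓕M (s ⊓ r)]) ω)
    (i : Fin d) {u t : ℕ} (hut : u ≤ t) {r : Fin d → ℕ} (hr : r i ≤ u)
    {A B : Set Ω} (hA : MeasurableSet[𝓕M r] A)
    (hB : MeasurableSet[𝓕M (Pi.single i t)] B) :
    ∫ x in A, B.indicator (fun _ => (1 : ℝ)) x ∂μ
      = ∫ x in A, (μ[B.indicator (fun _ => (1 : ℝ)) | 𝓕M (Pi.single i u)]) x ∂μ := by
  have hG : 𝓕M (Pi.single i u) ≤ m0 := hle _
  have hA0 : MeasurableSet A := hle r _ hA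
  have hB0 : MeasurableSet B := hle _ _ hB
  have hA' : MeasurableSet[𝓕M (r ⊔ Pi.single i u)] A := hF1 r _ le_sup_left _ hA
  have hkey := hF4 (r ⊔ Pi.single i u) (Pi.single i t) A B hA' hB
  rw [single_inf_aux i hut hr] at hkey
  have hintA : Integrable (A.indicator fun _ => (1 : ℝ)) μ :=
    (integrable_const 1).indicator hA0
  have hmul : μ[B.indicator (fun _ => (1 : ℝ)) | 𝓕M (Pi.single i u)]
        * A.indicator (fun _ => (1 : ℝ))
      = A.indicator (μ[B.indicator (fun _ => (1 : ℝ)) | 𝓕M (Pi.single i u)]) := by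
    funext ω
    by_cases hω : ω ∈ A <;>
      simp [hω, Pi.mul_apply, Set.indicator_of_mem, Set.indicator_of_notMem]
  have hintprod : Integrable (μ[B.indicator (fun _ => (1 : ℝ)) | 𝓕M (Pi.single i u)]
      * A.indicator fun _ => (1 : ℝ)) μ := by
    rw [hmul]; exact integrable_condExp.indicator hA0
  have hpull := condExp_mul_of_stronglyMeasurable_left (m := 𝓕M (Pi.single i u))
    (stronglyMeasurable_condExp) hintprod hintA
  calc ∫ x in A, B.indicator (fun _ => (1 : ℝ)) x ∂μ
      = ∫ x, ((A ∩ B).indicator fun _ => (1 : ℝ)) x ∂μ := by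
        rw [setIntegral_indicator hB0, integral_indicator (hA0.inter hB0)]
    _ = ∫ x, (μ[(A ∩ B).indicator (fun _ => (1 : ℝ)) | 𝓕M (Pi.single i u)]) x ∂μ :=
        (integral_condExp hG).symm
    _ = ∫ x, (fun ω => (μ[A.indicator (fun _ => (1 : ℝ)) | 𝓕M (Pi.single i u)]) ω *
          (μ[B.indicator (fun _ => (1 : ℝ)) | 𝓕M (Pi.single i u)]) ω) x ∂μ :=
        integral_congr_ae hkey
    _ = ∫ x, (μ[μ[B.indicator (fun _ => (1 : ℝ)) | 𝓕M (Pi.single i u)]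
          * A.indicator (fun _ => (1 : ℝ)) | 𝓕M (Pi.single i u)]) x ∂μ := by
        refine integral_congr_ae ?_
        filter_upwards [hpull] with ω hω
        simp only [Pi.mul_apply] at hω ⊢
        rw [mul_comm]
        exact hω.symm
    _ = ∫ x, (μ[B.indicator (fun _ => (1 : ℝ)) | 𝓕M (Pi.single i u)]
          * A.indicator (fun _ => (1 : ℝ))) x ∂μ := integral_condExp hG
    _ = ∫ x in A, (μ[B.indicator (fun _ => (1 : ℝ)) | 𝓕M (Pi.single i u)]) x ∂μ := by
        rw [hmul, integral_indicator hA0]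

lemma setIntegral_condexp_small
    (hF1 : ∀ s r : Fin d → ℕ, s ≤ r → 𝓕M s ≤ 𝓕M r)
    (hle : ∀ s : Fin d → ℕ, 𝓕M s ≤ m0)
    (hF4 : ∀ (s r : Fin d → ℕ) (A B : Set Ω), MeasurableSet[𝓕M s] A →
      MeasurableSet[𝓕M r] B →
      μ[(A ∩ B).indicator (fun _ => (1 : ℝ)) | 𝓕M (s ⊓ r)] =ᵐ[μ]
        fun ω => (μ[A.indicator (fun _ => (1 : ℝ)) | 𝓕M (s ⊓ r)]) ω *
          (μ[B.indicator (fun _ => (1 : ℝ)) | 𝓕M (s ⊓ r)]) ω)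
    (i : Fin d) {u t : ℕ} (hut : u ≤ t) {r : Fin d → ℕ} (hr : r i ≤ u)
    {A : Set Ω} (hA : MeasurableSet[𝓕M r] A)
    {f : Ω → ℝ} (hfint : Integrable f μ)
    (hfm : StronglyMeasurable[𝓕M (Pi.single i t)] f) :
    ∫ x in A, f x ∂μ = ∫ x in A, (μ[f | 𝓕M (Pi.single i u)]) x ∂μ := by
  have hmt : 𝓕M (Pi.single i t) ≤ m0 := hle _
  have hGle : 𝓕M (Pi.single i u) ≤ m0 := hle _
  have hA0 : MeasurableSet A := hle r _ hA
  have main : ∀ ⦃g : Ω → ℝ⦄, MemLp g 1 μ →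
      AEStronglyMeasurable[𝓕M (Pi.single i t)] g μ →
      ∫ x in A, g x ∂μ = ∫ x in A, (μ[g | 𝓕M (Pi.single i u)]) x ∂μ := by
    refine MemLp.induction_stronglyMeasurable hmt ENNReal.one_ne_top
      (fun g : Ω → ℝ => ∫ x in A, g x ∂μ = ∫ x in A, (μ[g | 𝓕M (Pi.single i u)]) x ∂μ)
      ?_ ?_ ?_ ?_
    · intro c B hB _
      have hsmul : B.indicator (fun _ => c) = c • B.indicator (fun _ => (1 : ℝ)) := by
        funext ω
        by_cases hω : ω ∈ B <;> simp [hω]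
      have hc : μ[c • B.indicator (fun _ => (1 : ℝ)) | 𝓕M (Pi.single i u)]
          =ᵐ[μ] c • μ[B.indicator (fun _ => (1 : ℝ)) | 𝓕M (Pi.single i u)] :=
        condExp_smul c _ _
      rw [hsmul]
      calc ∫ x in A, (c • B.indicator (fun _ => (1 : ℝ))) x ∂μ
          = c • ∫ x in A, B.indicator (fun _ => (1 : ℝ)) x ∂μ := integral_smul c _
        _ = c • ∫ x in A, (μ[B.indicator (fun _ => (1 : ℝ)) | 𝓕M (Pi.single i u)]) x ∂μ := by
            rw [indicator_integral_eq hF1 hle hF4 i hut hr hA hB]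
        _ = ∫ x in A, (c • μ[B.indicator (fun _ => (1 : ℝ)) | 𝓕M (Pi.single i u)]) x ∂μ :=
            (integral_smul c _).symm
        _ = ∫ x in A, (μ[c • B.indicator (fun _ => (1 : ℝ)) | 𝓕M (Pi.single i u)]) x ∂μ :=
            integral_congr_ae (ae_restrict_of_ae hc.symm)
    · intro g₁ g₂ _ hg₁ hg₂ _ _ h₁ h₂
      have hi₁ := memLp_one_iff_integrable.mp hg₁
      have hi₂ := memLp_one_iff_integrable.mp hg₂
      have hadd : μ[g₁ + g₂ | 𝓕M (Pi.single i u)]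
          =ᵐ[μ] μ[g₁ | 𝓕M (Pi.single i u)] + μ[g₂ | 𝓕M (Pi.single i u)] :=
        condExp_add hi₁ hi₂ _
      calc ∫ x in A, (g₁ + g₂) x ∂μ
          = ∫ x in A, g₁ x ∂μ + ∫ x in A, g₂ x ∂μ := by
            simp only [Pi.add_apply]
            exact integral_add hi₁.integrableOn hi₂.integrableOn
        _ = ∫ x in A, (μ[g₁ | 𝓕M (Pi.single i u)]) x ∂μ
              + ∫ x in A, (μ[g₂ | 𝓕M (Pi.single i u)]) x ∂μ := by rw [h₁, h₂]
        _ = ∫ x in A, (μ[g₁ + g₂ | 𝓕M (Pi.single i u)]) x ∂μ := by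
            rw [← integral_add integrable_condExp.integrableOn
              integrable_condExp.integrableOn]
            refine integral_congr_ae (ae_restrict_of_ae ?_)
            filter_upwards [hadd] with ω hω
            simp only [Pi.add_apply] at hω ⊢
            exact hω.symm
    · have heq₁ : (fun g : lpMeas ℝ ℝ (𝓕M (Pi.single i t)) 1 μ =>
            ∫ x in A, (g : Ω → ℝ) x ∂μ)
          = (fun g : Lp ℝ 1 μ => ∫ x in A, g x ∂μ) ∘ (Submodule.subtypeL _) := by
        rfl
      have heq₂ : (fun g : lpMeas ℝ ℝ (𝓕M (Pi.single i t)) 1 μ =>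
            ∫ x in A, (μ[(g : Ω → ℝ) | 𝓕M (Pi.single i u)]) x ∂μ)
          = (fun q : Lp ℝ 1 μ => ∫ x in A, q x ∂μ)
              ∘ (condExpL1CLM ℝ hGle μ) ∘ (Submodule.subtypeL _) := by
        refine funext fun g => ?_
        have h1 : μ[(g : Ω → ℝ) | 𝓕M (Pi.single i u)]
            =ᵐ[μ] condExpL1 hGle μ (g : Ω → ℝ) := condExp_ae_eq_condExpL1 hGle _
        have hgint : Integrable ((g : Lp ℝ 1 μ) : Ω → ℝ) μ := L1.integrable_coeFn _
        have h2 : condExpL1 hGle μ ((g : Lp ℝ 1 μ) : Ω → ℝ)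
            = condExpL1CLM ℝ hGle μ (g : Lp ℝ 1 μ) := by
          rw [condExpL1_eq hgint, Integrable.toL1_coeFn]
        calc ∫ x in A, (μ[(g : Ω → ℝ) | 𝓕M (Pi.single i u)]) x ∂μ
            = ∫ x in A, (condExpL1 hGle μ (g : Ω → ℝ)) x ∂μ :=
              integral_congr_ae (ae_restrict_of_ae h1)
          _ = ∫ x in A, (condExpL1CLM ℝ hGle μ (g : Lp ℝ 1 μ)) x ∂μ := by rw [h2]
      refine isClosed_eq ?_ ?_
      · rw [heq₁]
        exact (continuous_setIntegral A).comp (ContinuousLinearMap.continuous _)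
      · rw [heq₂]
        exact (continuous_setIntegral A).comp
          ((condExpL1CLM ℝ hGle μ).continuous.comp (ContinuousLinearMap.continuous _))
    · intro g₁ g₂ hg _ h₁
      calc ∫ x in A, g₂ x ∂μ
          = ∫ x in A, g₁ x ∂μ := integral_congr_ae (ae_restrict_of_ae hg.symm)
        _ = ∫ x in A, (μ[g₁ | 𝓕M (Pi.single i u)]) x ∂μ := h₁
        _ = ∫ x in A, (μ[g₂ | 𝓕M (Pi.single i u)]) x ∂μ :=
            integral_congr_ae (ae_restrict_of_ae (condExp_congr_ae hg))
  exact main (memLp_one_iff_integrable.mpr hfint) hfm.aestronglyMeasurable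

lemma condexp_Fbig_eq
    (hF1 : ∀ s r : Fin d → ℕ, s ≤ r → 𝓕M s ≤ 𝓕M r)
    (hle : ∀ s : Fin d → ℕ, 𝓕M s ≤ m0)
    (hF4 : ∀ (s r : Fin d → ℕ) (A B : Set Ω), MeasurableSet[𝓕M s] A →
      MeasurableSet[𝓕M r] B →
      μ[(A ∩ B).indicator (fun _ => (1 : ℝ)) | 𝓕M (s ⊓ r)] =ᵐ[μ]
        fun ω => (μ[A.indicator (fun _ => (1 : ℝ)) | 𝓕M (s ⊓ r)]) ω *
          (μ[B.indicator (fun _ => (1 : ℝ)) | 𝓕M (s ⊓ r)]) ω)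
    (i : Fin d) {u t : ℕ} (hut : u ≤ t)
    {f : Ω → ℝ} (hfint : Integrable f μ)
    (hfm : StronglyMeasurable[𝓕M (Pi.single i t)] f) :
    μ[f | Fbig 𝓕M i u] =ᵐ[μ] μ[f | 𝓕M (Pi.single i u)] := by
  have hmbig : Fbig 𝓕M i u ≤ m0 := by
    simp only [Fbig]
    exact iSup₂_le fun r _ => hle r
  have hsmall : 𝓕M (Pi.single i u) ≤ Fbig 𝓕M i u := by
    simp only [Fbig]
    exact le_iSup₂ (f := fun (r : Fin d → ℕ) (_ : r i ≤ u) => 𝓕M r) _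
      (le_of_eq (by simp))
  have hgen : Fbig 𝓕M i u = MeasurableSpace.generateFrom
      {A : Set Ω | ∃ r : Fin d → ℕ, r i ≤ u ∧ MeasurableSet[𝓕M r] A} := by
    have h1 : Fbig 𝓕M i u = ⨆ (p : {r : Fin d → ℕ // r i ≤ u}), 𝓕M p.1 := by
      simp only [Fbig]
      apply le_antisymm
      · exact iSup₂_le fun r hr =>
          le_iSup (fun p : {r : Fin d → ℕ // r i ≤ u} => 𝓕M p.1) ⟨r, hr⟩
      · exact iSup_le fun p => le_iSup₂ (f := fun (r : Fin d → ℕ) (_ : r i ≤ u) => 𝓕M r)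
          p.1 p.2
    rw [h1, MeasurableSpace.measurableSpace_iSup_eq]
    congr 1
    ext A
    constructor
    · rintro ⟨p, hp⟩
      exact ⟨p.1, p.2, hp⟩
    · rintro ⟨r, hr, hA⟩
      exact ⟨⟨r, hr⟩, hA⟩
  have hpi : IsPiSystem {A : Set Ω | ∃ r : Fin d → ℕ, r i ≤ u ∧ MeasurableSet[𝓕M r] A} := by
    rintro A ⟨r₁, hr₁, hA⟩ B ⟨r₂, hr₂, hB⟩ -
    refine ⟨r₁ ⊔ r₂, ?_, (hF1 r₁ _ le_sup_left _ hA).inter (hF1 r₂ _ le_sup_right _ hB)⟩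
    rw [Pi.sup_apply]
    exact sup_le hr₁ hr₂
  refine (ae_eq_condExp_of_forall_setIntegral_eq hmbig hfint
    (fun s _ _ => integrable_condExp.integrableOn) (fun s hms _ => ?_)
    (stronglyMeasurable_condExp.mono hsmall).aestronglyMeasurable).symm
  refine MeasurableSpace.induction_on_inter (m := Fbig 𝓕M i u)
    (C := fun s (_ : MeasurableSet[Fbig 𝓕M i u] s) => ∫ x in s, (μ[f | 𝓕M (Pi.single i u)]) x ∂μ = ∫ x in s, f x ∂μ)
    hgen hpi ?_ ?_ ?_ ?_ _ hms
  · simp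
  · rintro B ⟨r, hr, hB⟩
    exact (setIntegral_condexp_small hF1 hle hF4 i hut hr hB hfint hfm).symm
  · intro B hB hCB
    have hB0 : MeasurableSet B := hmbig _ hB
    have h1 := integral_add_compl hB0
      (integrable_condExp (μ := μ) (m := 𝓕M (Pi.single i u)) (f := f))
    have h2 := integral_add_compl hB0 hfint
    have h3 : ∫ x, (μ[f | 𝓕M (Pi.single i u)]) x ∂μ = ∫ x, f x ∂μ :=
      integral_condExp (hle _)
    linarith
  · intro g hdisj hgm hC
    have hgm0 : ∀ n, MeasurableSet (g n) := fun n => hmbig _ (hgm n)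
    rw [integral_iUnion hgm0 hdisj integrable_condExp.integrableOn,
      integral_iUnion hgm0 hdisj hfint.integrableOn]
    exact tsum_congr hC

end EnlargementAux

/-- Proposition 6.5 (enlargement of filtrations): under (F1), (F2), (F4), every
supermartingale for the small filtration `F_i(t) = F(0,…,t,…,0)` is also a supermartingale
for the large filtration `F^i`. -/
theorem enlargement_of_filtrations {Ω : Type*}
    [m0 : MeasurableSpace Ω] (μ : Measure Ω) [IsProbabilityMeasure μ]
    {d : ℕ} (hd : 0 < d)
    (𝓕M : (Fin d → ℕ) → MeasurableSpace Ω)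
    (hF1 : ∀ s r : Fin d → ℕ, s ≤ r → 𝓕M s ≤ 𝓕M r)
    (hle : ∀ s : Fin d → ℕ, 𝓕M s ≤ m0)
    (hF2 : ∀ A : Set Ω, μ A = 0 → MeasurableSet[𝓕M 0] A)
    (hF4 : ∀ (s r : Fin d → ℕ) (A B : Set Ω), MeasurableSet[𝓕M s] A →
      MeasurableSet[𝓕M r] B →
      μ[(A ∩ B).indicator (fun _ => (1 : ℝ)) | 𝓕M (s ⊓ r)] =ᵐ[μ]
        fun ω => (μ[A.indicator (fun _ => (1 : ℝ)) | 𝓕M (s ⊓ r)]) ω *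
          (μ[B.indicator (fun _ => (1 : ℝ)) | 𝓕M (s ⊓ r)]) ω)
    (i : Fin d) (X : ℕ → Ω → ℝ)
    (hadp : ∀ t : ℕ, StronglyMeasurable[𝓕M (Pi.single i t)] (X t))
    (hint : ∀ t : ℕ, Integrable (X t) μ)
    (hsm : ∀ u t : ℕ, u ≤ t → μ[X t | 𝓕M (Pi.single i u)] ≤ᵐ[μ] X u) :
    (∀ t : ℕ, StronglyMeasurable[Fbig 𝓕M i t] (X t)) ∧
    (∀ t : ℕ, Integrable (X t) μ) ∧
    (∀ u t : ℕ, u ≤ t → μ[X t | Fbig 𝓕M i u] ≤ᵐ[μ] X u) := by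
  refine ⟨fun t => (hadp t).mono ?_, hint, fun u t hut => ?_⟩
  · simp only [Fbig]
    exact le_iSup₂ (f := fun (r : Fin d → ℕ) (_ : r i ≤ t) => 𝓕M r) _
      (le_of_eq (by simp))
  · have h := condexp_Fbig_eq hF1 hle hF4 i hut (hint t) (hadp t)
    filter_upwards [h, hsm u t hut] with ω h1 h2
    rw [h1]
    exact h2

end DynAlloc
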